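/- Let W ∈ {W₀, W₁} and let a : ℤ² → ℝ be a finitely supported sequence such that S_{a,W} c = 0 for every constant sequence c : ℤ² → ℝ. Then there exist finitely supported sequences b₁, b₂ : ℤ² → ℝ such that for every bounded c : ℤ² → ℝ, S_{a,W} c = S_{b₁,W}(∇₁c) + S_{b₂,W}(∇₂c). -/

import Mathlib

/-- Bi-infinite two-dimensional integer index set `ℤ²`. -/
abbrev Z2 : Type := Fin 2 → ℤ

/-- The scaling matrix `W₀` with rows `(4,0)` and `(0,2)`. -/
def W0 : Matrix (Fin 2) (Fin 2) ℤ := !![4, 0; 0, 2]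

/-- The scaling matrix `W₁` with rows `(4,-4)` and `(0,2)`. -/
def W1 : Matrix (Fin 2) (Fin 2) ℤ := !![4, -4; 0, 2]

/-- `W_η` for `η ∈ {0,1}`. -/
def Wsel : Fin 2 → Matrix (Fin 2) (Fin 2) ℤ := ![W0, W1]

/-- A sequence `c : ℤ² → ℝ` is bounded. -/
def Bdd (c : Z2 → ℝ) : Prop := ∃ K : ℝ, ∀ α, |c α| ≤ K

/-- The subdivision operator `S_{a,W} c = Σ_α a(· − Wα) c(α)`. -/
noncomputable def subd (a : Z2 → ℝ) (W : Matrix (Fin 2) (Fin 2) ℤ) (c : Z2 → ℝ) : Z2 → ℝ :=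
  fun β => ∑' α : Z2, a (β - W.mulVec α) * c α

/-- Backward difference `∇₁c = c(· − e₁) − c`. -/
def nabla1 (c : Z2 → ℝ) : Z2 → ℝ := fun α => c (α - ![1, 0]) - c α

/-- Backward difference `∇₂c = c(· − e₂) − c`. -/
def nabla2 (c : Z2 → ℝ) : Z2 → ℝ := fun α => c (α - ![0, 1]) - c α

open Function

lemma summable_of_finsupp {ι : Type*} {f : ι → ℝ} (hf : (support f).Finite) : Summable f :=
  summable_of_ne_finset_zero (s := hf.toFinset) (fun b hb => by
    by_contra h; exact hb (hf.mem_toFinset.2 h))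

lemma summable_comp_inj {ι κ : Type*} {f : ι → ℝ} (hf : (support f).Finite)
    {e : κ → ι} (he : Function.Injective e) : Summable (fun k => f (e k)) := by
  apply summable_of_finsupp
  have : support (fun k => f (e k)) = e ⁻¹' (support f) := by ext x; simp
  rw [this]; exact hf.preimage he.injOn

lemma line_inj {v : Z2} {i : Fin 2} (hvi : v i ≠ 0) (γ : Z2) :
    Function.Injective (fun k : ℤ => γ + k • v) := by
  intro k k' h
  have h2 := congrFun h i
  simp only [Pi.add_apply, Pi.smul_apply, smul_eq_mul, add_right_inj] at h2
  exact mul_right_cancel₀ hvi h2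

set_option maxHeartbeats 1000000 in
lemma lemC {v : Z2} {i : Fin 2} (hvi : v i ≠ 0) {f : Z2 → ℝ}
    (hf : (support f).Finite)
    (hsum : ∀ γ : Z2, ∑' k : ℤ, f (γ + k • v) = 0) :
    ∃ g : Z2 → ℝ, (support g).Finite ∧ ∀ γ, f γ = g (γ - v) - g γ := by
  classical
  have hline : ∀ γ : Z2, Summable (fun k : ℤ => f (γ + k • v)) :=
    fun γ => summable_comp_inj hf (line_inj hvi γ)
  have hS0 : ∀ γ : Z2, Summable (fun k : ℤ => if k ≤ 0 then f (γ + k • v) else 0) := by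
    intro γ
    refine (hline γ).summable_of_eq_zero_or_self (fun k => ?_)
    split <;> simp
  have hS1 : ∀ γ : Z2, Summable (fun k : ℤ => if 1 ≤ k then f (γ + k • v) else 0) := by
    intro γ
    refine (hline γ).summable_of_eq_zero_or_self (fun k => ?_)
    split <;> simp
  have hSm1 : ∀ γ : Z2, Summable (fun k : ℤ => if k ≤ -1 then f (γ + k • v) else 0) := by
    intro γ
    refine (hline γ).summable_of_eq_zero_or_self (fun k => ?_)
    split <;> simp
  set g : Z2 → ℝ := fun γ => -∑' k : ℤ, if k ≤ 0 then f (γ + k • v) else 0 with hg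
  have hgdef : ∀ γ : Z2, g γ = -∑' k : ℤ, if k ≤ 0 then f (γ + k • v) else 0 := fun γ => rfl
  -- alternative formula for g
  have hgalt : ∀ γ : Z2, g γ = ∑' k : ℤ, if 1 ≤ k then f (γ + k • v) else 0 := by
    intro γ
    have hsplit : ∀ k : ℤ, f (γ + k • v) =
        (if k ≤ 0 then f (γ + k • v) else 0) + (if 1 ≤ k then f (γ + k • v) else 0) := by
      intro k; split_ifs with h1 h2 <;> simp_all <;> omega
    have h2 := hsum γ
    rw [tsum_congr hsplit, Summable.tsum_add (hS0 γ) (hS1 γ)] at h2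
    rw [hgdef γ]; linarith
  -- the telescoping identity
  have htel : ∀ γ : Z2, f γ = g (γ - v) - g γ := by
    intro γ
    have hre : (∑' k : ℤ, if k ≤ 0 then f (γ - v + k • v) else 0)
        = ∑' k : ℤ, if k ≤ -1 then f (γ + k • v) else 0 := by
      rw [← Equiv.tsum_eq (Equiv.addRight (1 : ℤ))
        (fun k : ℤ => if k ≤ 0 then f (γ - v + k • v) else 0)]
      refine tsum_congr (fun k => ?_)
      have harg : γ - v + (k + 1) • v = γ + k • v := by rw [add_smul]; abel
      simp only [Equiv.coe_addRight, harg]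
      congr 1
      simp only [eq_iff_iff]
      omega
    have hdd : g (γ - v) - g γ
        = ∑' k : ℤ, ((if k ≤ 0 then f (γ + k • v) else 0) - (if k ≤ -1 then f (γ + k • v) else 0)) := by
      rw [Summable.tsum_sub (hS0 γ) (hSm1 γ), hgdef, hgdef, hre]
      ring
    rw [hdd]
    have hpt : ∀ k : ℤ, ((if k ≤ 0 then f (γ + k • v) else 0) - (if k ≤ -1 then f (γ + k • v) else 0))
        = if k = 0 then f γ else 0 := by
      intro k
      rcases lt_trichotomy k 0 with h | h | h
      · rw [if_pos (by omega), if_pos (by omega), if_neg (by omega)]; ring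
      · subst h; simp
      · rw [if_neg (by omega), if_neg (by omega), if_neg (by omega)]; ring
    rw [tsum_congr hpt, tsum_ite_eq]
  -- finite support
  set T := hf.toFinset with hT
  set M : ℤ := ∑ p ∈ T ×ˢ T, |p.1 i - p.2 i| with hM
  have hsupp : support g ⊆ ↑((Finset.Icc (1:ℤ) M ×ˢ T).image fun p => p.2 - p.1 • v) := by
    intro γ hγ
    have h1 : ∃ k : ℤ, k ≤ 0 ∧ γ + k • v ∈ support f := by
      by_contra hc
      push_neg at hc
      apply hγ
      have hz : ∀ k : ℤ, (if k ≤ 0 then f (γ + k • v) else 0) = 0 := by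
        intro k; split_ifs with h
        · exact Function.notMem_support.mp (hc k h)
        · rfl
      rw [hgdef γ, tsum_congr hz, tsum_zero, neg_zero]
    have h2 : ∃ k : ℤ, 1 ≤ k ∧ γ + k • v ∈ support f := by
      by_contra hc
      push_neg at hc
      apply hγ
      have hz : ∀ k : ℤ, (if 1 ≤ k then f (γ + k • v) else 0) = 0 := by
        intro k; split_ifs with h
        · exact Function.notMem_support.mp (hc k h)
        · rfl
      rw [hgalt γ, tsum_congr hz, tsum_zero]
    obtain ⟨k1, hk1, hm1⟩ := h1
    obtain ⟨k2, hk2, hm2⟩ := h2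
    have hmem1 : γ + k1 • v ∈ T := hf.mem_toFinset.2 hm1
    have hmem2 : γ + k2 • v ∈ T := hf.mem_toFinset.2 hm2
    have hdiff : (γ + k2 • v) i - (γ + k1 • v) i = (k2 - k1) * v i := by
      simp only [Pi.add_apply, Pi.smul_apply, smul_eq_mul]; ring
    have hMb : |(γ + k2 • v) i - (γ + k1 • v) i| ≤ M := by
      rw [hM]
      have hpair : ((γ + k2 • v, γ + k1 • v) : Z2 × Z2) ∈ T ×ˢ T :=
        Finset.mem_product.2 ⟨hmem2, hmem1⟩
      exact Finset.single_le_sum (f := fun p : Z2 × Z2 => |p.1 i - p.2 i|)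
        (fun p _ => abs_nonneg _) hpair
    have habs : |k2 - k1| ≤ M := by
      have h1v : (1:ℤ) ≤ |v i| := Int.one_le_abs hvi
      calc |k2 - k1| ≤ |k2 - k1| * |v i| := le_mul_of_one_le_right (abs_nonneg _) h1v
        _ = |(k2 - k1) * v i| := (abs_mul _ _).symm
        _ = |(γ + k2 • v) i - (γ + k1 • v) i| := by rw [hdiff]
        _ ≤ M := hMb
    have hk2M : k2 ≤ M := by
      have h3 := abs_le.mp habs
      omega
    refine Finset.mem_coe.2 (Finset.mem_image.2 ⟨(k2, γ + k2 • v),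
      Finset.mem_product.2 ⟨Finset.mem_Icc.2 ⟨hk2, hk2M⟩, hmem2⟩, ?_⟩)
    show γ + k2 • v - k2 • v = γ
    abel
  exact ⟨g, Set.Finite.subset (Finset.finite_toSet _) hsupp, htel⟩

set_option maxHeartbeats 1000000 in
lemma main_aux (W : Matrix (Fin 2) (Fin 2) ℤ) (hWinj : Function.Injective W.mulVec)
    (hmul : ∀ μ : Z2, W.mulVec μ = μ 0 • W.mulVec ![1,0] + μ 1 • W.mulVec ![0,1])
    (hu1 : (W.mulVec ![1,0]) 1 = 0) (hu0 : (W.mulVec ![1,0]) 0 ≠ 0)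
    (hv1 : (W.mulVec ![0,1]) 1 = 2)
    (a : Z2 → ℝ) (ha : (Function.support a).Finite)
    (h0 : ∀ r : ℝ, subd a W (fun _ => r) = 0) :
    ∃ b1 b2 : Z2 → ℝ,
      (Function.support b1).Finite ∧ (Function.support b2).Finite ∧
      ∀ c : Z2 → ℝ, Bdd c →
        subd a W c = fun β => subd b1 W (nabla1 c) β + subd b2 W (nabla2 c) β := by
  classical
  obtain ⟨u, hu⟩ : ∃ u : Z2, u = W.mulVec ![1,0] := ⟨_, rfl⟩
  obtain ⟨v, hv⟩ : ∃ v : Z2, v = W.mulVec ![0,1] := ⟨_, rfl⟩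
  rw [← hu] at hu1 hu0
  rw [← hv] at hv1
  have hmul' : ∀ μ : Z2, W.mulVec μ = μ 0 • u + μ 1 • v := by
    intro μ; rw [hmul μ, ← hu, ← hv]
  have hv1' : v 1 ≠ 0 := by rw [hv1]; norm_num
  -- summability of subdivision-type sums
  have hsumW : ∀ (F : Z2 → ℝ), (support F).Finite → ∀ (β : Z2) (c : Z2 → ℝ),
      Summable (fun α : Z2 => F (β - W.mulVec α) * c α) := by
    intro F hF β c
    have hinj : Function.Injective (fun α : Z2 => β - W.mulVec α) := by
      intro x y h
      exact hWinj (sub_right_injective h)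
    apply summable_of_finsupp
    apply Set.Finite.subset (hF.preimage hinj.injOn)
    intro α hα
    simp only [Set.mem_preimage, Function.mem_support] at *
    exact fun h => hα (by rw [h, zero_mul])
  -- zero sum over each coset
  have HA : ∀ γ : Z2, (∑' μ : Z2, a (γ + W.mulVec μ)) = 0 := by
    intro γ
    have h1 := congrFun (h0 1) γ
    simp only [subd, mul_one, Pi.zero_apply] at h1
    calc (∑' μ : Z2, a (γ + W.mulVec μ))
        = ∑' μ : Z2, a (γ - W.mulVec μ) := by
          rw [← Equiv.tsum_eq (Equiv.neg Z2) (fun μ : Z2 => a (γ + W.mulVec μ))]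
          refine tsum_congr (fun μ => ?_)
          simp [Matrix.mulVec_neg, sub_eq_add_neg]
      _ = 0 := h1
  -- column sums, representatives, concentrated part
  obtain ⟨s, hsdef⟩ : ∃ s : Z2 → ℝ, ∀ γ, s γ = ∑' k : ℤ, a (γ + k • v) := ⟨_, fun _ => rfl⟩
  obtain ⟨rep, hrepdef⟩ : ∃ rep : Z2 → Z2, ∀ γ, rep γ = γ - (γ 1 / 2) • v := ⟨_, fun _ => rfl⟩
  obtain ⟨d, hddef⟩ : ∃ d : Z2 → ℝ, ∀ γ, d γ = if rep γ = γ then s γ else 0 := ⟨_, fun _ => rfl⟩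
  obtain ⟨f, hfdef⟩ : ∃ f : Z2 → ℝ, ∀ γ, f γ = a γ - d γ := ⟨_, fun _ => rfl⟩
  have hs_shift : ∀ (γ : Z2) (k : ℤ), s (γ + k • v) = s γ := by
    intro γ k
    rw [hsdef, hsdef]
    have h1 : ∀ j : ℤ, a (γ + k • v + j • v) = a (γ + (j + k) • v) := by
      intro j; congr 1; rw [add_smul]; abel
    calc (∑' j : ℤ, a (γ + k • v + j • v)) = ∑' j : ℤ, a (γ + (j + k) • v) := tsum_congr h1
      _ = ∑' j : ℤ, a (γ + j • v) := Equiv.tsum_eq (Equiv.addRight k) (fun j : ℤ => a (γ + j • v))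
  have hrep_shift : ∀ (γ : Z2) (k : ℤ), rep (γ + k • v) = rep γ := by
    intro γ k
    rw [hrepdef, hrepdef]
    have h1 : (γ + k • v) 1 = γ 1 + k * 2 := by
      simp [Pi.add_apply, Pi.smul_apply, smul_eq_mul, hv1]
    rw [h1]
    have h2 : (γ 1 + k * 2) / 2 = γ 1 / 2 + k := by omega
    rw [h2, add_smul]
    abel
  have hcond : ∀ (γ : Z2) (k : ℤ), (rep γ = γ + k • v) ↔ k = -(γ 1 / 2) := by
    intro γ k
    constructor
    · intro h
      rw [hrepdef] at h
      have h1 := congrFun h 1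
      simp only [Pi.sub_apply, Pi.add_apply, Pi.smul_apply, smul_eq_mul, hv1] at h1
      omega
    · intro h; subst h; rw [hrepdef, neg_smul, sub_eq_add_neg]
  have hd_line_v : ∀ (γ : Z2) (k : ℤ), d (γ + k • v) = if k = -(γ 1 / 2) then s γ else 0 := by
    intro γ k
    rw [hddef, hrep_shift, hs_shift]
    exact if_congr (hcond γ k) rfl rfl
  have hd_sum_v : ∀ γ : Z2, (∑' k : ℤ, d (γ + k • v)) = s γ := by
    intro γ
    rw [tsum_congr (hd_line_v γ), tsum_ite_eq]
  have hd_supp : (support d).Finite := by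
    apply (ha.image rep).subset
    intro γ hγ
    rw [Function.mem_support, hddef] at hγ
    by_cases hfix : rep γ = γ
    · rw [if_pos hfix] at hγ
      have h2 : ∃ k : ℤ, a (γ + k • v) ≠ 0 := by
        by_contra hc
        push_neg at hc
        apply hγ
        rw [hsdef]
        calc (∑' k : ℤ, a (γ + k • v)) = ∑' k : ℤ, (0:ℝ) := tsum_congr hc
          _ = 0 := tsum_zero
      obtain ⟨k, hk⟩ := h2
      exact ⟨γ + k • v, hk, by rw [hrep_shift γ k, hfix]⟩
    · rw [if_neg hfix] at hγ; exact absurd rfl hγ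
  have hrep_fix : ∀ γ : Z2, rep γ = γ ↔ γ 1 / 2 = 0 := by
    intro γ
    constructor
    · intro h
      rw [hrepdef] at h
      have h1 := congrFun h 1
      simp only [Pi.sub_apply, Pi.smul_apply, smul_eq_mul, hv1] at h1
      omega
    · intro h; rw [hrepdef, h, zero_smul, sub_zero]
  have hd_line_u : ∀ (γ : Z2) (k : ℤ), d (γ + k • u) = if γ 1 / 2 = 0 then s (γ + k • u) else 0 := by
    intro γ k
    rw [hddef]
    have h1 : (rep (γ + k • u) = γ + k • u) ↔ γ 1 / 2 = 0 := by
      rw [hrep_fix]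
      have h2 : (γ + k • u) 1 = γ 1 := by
        simp [Pi.add_apply, Pi.smul_apply, smul_eq_mul, hu1]
      rw [h2]
    exact if_congr h1 rfl rfl
  have hcoset : ∀ γ : Z2, (∑' k : ℤ, s (γ + k • u)) = 0 := by
    intro γ
    have hFinj : Function.Injective (fun p : ℤ × ℤ => γ + p.1 • u + p.2 • v) := by
      intro p q h
      have hWp : ∀ r : ℤ × ℤ, γ + r.1 • u + r.2 • v = γ + W.mulVec ![r.1, r.2] := by
        intro r
        rw [hmul' ![r.1, r.2]]
        simp only [Matrix.cons_val_zero, Matrix.cons_val_one, Matrix.head_cons]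
        rw [add_assoc]
      have h' : γ + p.1 • u + p.2 • v = γ + q.1 • u + q.2 • v := h
      rw [hWp p, hWp q] at h' 
      have h2 : W.mulVec ![p.1, p.2] = W.mulVec ![q.1, q.2] := add_left_cancel h'
      have h3 := hWinj h2
      have hp1 := congrFun h3 0
      have hp2 := congrFun h3 1
      simp only [Matrix.cons_val_zero, Matrix.cons_val_one, Matrix.head_cons] at hp1 hp2
      exact Prod.ext hp1 hp2
    have hFs : Summable (fun p : ℤ × ℤ => a (γ + p.1 • u + p.2 • v)) :=
      summable_comp_inj ha hFinj
    have hFk : ∀ k : ℤ, Summable (fun j : ℤ => a (γ + k • u + j • v)) :=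
      fun k => summable_comp_inj ha (line_inj hv1' (γ + k • u))
    have hprod := Summable.tsum_prod' hFs hFk
    have hleft : (∑' p : ℤ × ℤ, a (γ + p.1 • u + p.2 • v)) = 0 := by
      rw [← Equiv.tsum_eq (piFinTwoEquiv fun _ => ℤ)
        (fun p : ℤ × ℤ => a (γ + p.1 • u + p.2 • v))]
      calc (∑' μ : Z2, a (γ + μ 0 • u + μ 1 • v))
          = ∑' μ : Z2, a (γ + W.mulVec μ) := by
            refine tsum_congr (fun μ => ?_)
            rw [hmul' μ, add_assoc]
        _ = 0 := HA γ
    calc (∑' k : ℤ, s (γ + k • u))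
        = ∑' k : ℤ, ∑' j : ℤ, a (γ + k • u + j • v) := tsum_congr (fun k => hsdef _)
      _ = ∑' p : ℤ × ℤ, a (γ + p.1 • u + p.2 • v) := hprod.symm
      _ = 0 := hleft
  have hd_sum_u : ∀ γ : Z2, (∑' k : ℤ, d (γ + k • u)) = 0 := by
    intro γ
    rw [tsum_congr (hd_line_u γ)]
    by_cases hq : γ 1 / 2 = 0
    · simp only [if_pos hq]
      exact hcoset γ
    · simp only [if_neg hq]
      exact tsum_zero
  have hf_supp : (support f).Finite := by
    apply (ha.union hd_supp).subset
    intro γ hγ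
    rw [Function.mem_support, hfdef] at hγ
    by_contra hc
    simp only [Set.mem_union, Function.mem_support, not_or, not_not] at hc
    exact hγ (by rw [hc.1, hc.2, sub_zero])
  have hf_sum_v : ∀ γ : Z2, (∑' k : ℤ, f (γ + k • v)) = 0 := by
    intro γ
    have hsa : Summable (fun k : ℤ => a (γ + k • v)) := summable_comp_inj ha (line_inj hv1' γ)
    have hsd : Summable (fun k : ℤ => d (γ + k • v)) :=
      summable_comp_inj hd_supp (line_inj hv1' γ)
    calc (∑' k : ℤ, f (γ + k • v))
        = ∑' k : ℤ, (a (γ + k • v) - d (γ + k • v)) := tsum_congr (fun k => hfdef _)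
      _ = (∑' k : ℤ, a (γ + k • v)) - ∑' k : ℤ, d (γ + k • v) := Summable.tsum_sub hsa hsd
      _ = s γ - s γ := by rw [← hsdef γ, hd_sum_v γ]
      _ = 0 := sub_self _
  obtain ⟨g2, hg2fin, hg2⟩ := lemC (i := 1) hv1' hf_supp hf_sum_v
  obtain ⟨g1, hg1fin, hg1⟩ := lemC (i := 0) hu0 hd_supp hd_sum_u
  have hab : ∀ γ : Z2, a γ = g1 (γ - u) - g1 γ + (g2 (γ - v) - g2 γ) := by
    intro γ
    have h1 := hg1 γ
    have h2 := hg2 γ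
    have h3 := hfdef γ
    linarith
  refine ⟨g1, g2, hg1fin, hg2fin, ?_⟩
  intro c _
  funext β
  show subd a W c β = subd g1 W (nabla1 c) β + subd g2 W (nabla2 c) β
  have hg1s : (support (fun γ : Z2 => g1 (γ - u))).Finite := by
    have hinj : Function.Injective (fun γ : Z2 => γ - u) := sub_left_injective
    apply Set.Finite.subset (hg1fin.preimage hinj.injOn)
    intro γ hγ
    exact hγ
  have hg2s : (support (fun γ : Z2 => g2 (γ - v))).Finite := by
    have hinj : Function.Injective (fun γ : Z2 => γ - v) := sub_left_injective
    apply Set.Finite.subset (hg2fin.preimage hinj.injOn)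
    intro γ hγ
    exact hγ
  have s1 : Summable (fun α : Z2 => g1 (β - W.mulVec α - u) * c α) := hsumW _ hg1s β c
  have s2 : Summable (fun α : Z2 => g1 (β - W.mulVec α) * c α) := hsumW _ hg1fin β c
  have s3 : Summable (fun α : Z2 => g2 (β - W.mulVec α - v) * c α) := hsumW _ hg2s β c
  have s4 : Summable (fun α : Z2 => g2 (β - W.mulVec α) * c α) := hsumW _ hg2fin β c
  have s5 : Summable (fun α : Z2 => g1 (β - W.mulVec α) * c (α - ![1,0])) :=
    hsumW _ hg1fin β (fun α => c (α - ![1,0]))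
  have s6 : Summable (fun α : Z2 => g2 (β - W.mulVec α) * c (α - ![0,1])) :=
    hsumW _ hg2fin β (fun α => c (α - ![0,1]))
  have reidx1 : (∑' α : Z2, g1 (β - W.mulVec α - u) * c α)
      = ∑' α : Z2, g1 (β - W.mulVec α) * c (α - ![1,0]) := by
    rw [← Equiv.tsum_eq (Equiv.addRight (![1,0] : Z2))
      (fun α : Z2 => g1 (β - W.mulVec α) * c (α - ![1,0]))]
    refine tsum_congr (fun α => ?_)
    have h1 : W.mulVec (α + ![1,0]) = W.mulVec α + u := by
      rw [Matrix.mulVec_add, ← hu]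
    simp only [Equiv.coe_addRight, h1, sub_add_eq_sub_sub, add_sub_cancel_right]
  have reidx2 : (∑' α : Z2, g2 (β - W.mulVec α - v) * c α)
      = ∑' α : Z2, g2 (β - W.mulVec α) * c (α - ![0,1]) := by
    rw [← Equiv.tsum_eq (Equiv.addRight (![0,1] : Z2))
      (fun α : Z2 => g2 (β - W.mulVec α) * c (α - ![0,1]))]
    refine tsum_congr (fun α => ?_)
    have h1 : W.mulVec (α + ![0,1]) = W.mulVec α + v := by
      rw [Matrix.mulVec_add, ← hv]
    simp only [Equiv.coe_addRight, h1, sub_add_eq_sub_sub, add_sub_cancel_right]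
  have claim1 : subd g1 W (nabla1 c) β
      = (∑' α : Z2, g1 (β - W.mulVec α - u) * c α)
        - ∑' α : Z2, g1 (β - W.mulVec α) * c α := by
    simp only [subd, nabla1]
    rw [tsum_congr (fun α : Z2 =>
      mul_sub (g1 (β - W.mulVec α)) (c (α - ![1,0])) (c α)), Summable.tsum_sub s5 s2, reidx1]
  have claim2 : subd g2 W (nabla2 c) β
      = (∑' α : Z2, g2 (β - W.mulVec α - v) * c α)
        - ∑' α : Z2, g2 (β - W.mulVec α) * c α := by
    simp only [subd, nabla2]
    rw [tsum_congr (fun α : Z2 =>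
      mul_sub (g2 (β - W.mulVec α)) (c (α - ![0,1])) (c α)), Summable.tsum_sub s6 s4, reidx2]
  have claim3 : subd a W c β
      = ((∑' α : Z2, g1 (β - W.mulVec α - u) * c α)
          - ∑' α : Z2, g1 (β - W.mulVec α) * c α)
        + ((∑' α : Z2, g2 (β - W.mulVec α - v) * c α)
          - ∑' α : Z2, g2 (β - W.mulVec α) * c α) := by
    simp only [subd]
    calc (∑' α : Z2, a (β - W.mulVec α) * c α)
        = ∑' α : Z2, ((g1 (β - W.mulVec α - u) * c α - g1 (β - W.mulVec α) * c α)
            + (g2 (β - W.mulVec α - v) * c α - g2 (β - W.mulVec α) * c α)) :=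
          tsum_congr (fun α => by rw [hab (β - W.mulVec α)]; ring)
      _ = _ := by rw [Summable.tsum_add (s1.sub s2) (s3.sub s4), Summable.tsum_sub s1 s2, Summable.tsum_sub s3 s4]
  rw [claim1, claim2, claim3]

/-- Let `W ∈ {W₀, W₁}` and let `a` be a finitely supported mask with `S_{a,W} c = 0`
for every constant sequence `c`. Then there are finitely supported `b₁, b₂` with
`S_{a,W} c = S_{b₁,W}(∇₁c) + S_{b₂,W}(∇₂c)` for every bounded `c`. -/
theorem stmt12 (W : Matrix (Fin 2) (Fin 2) ℤ) (hW : W = W0 ∨ W = W1)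
    (a : Z2 → ℝ) (ha : (Function.support a).Finite)
    (h0 : ∀ r : ℝ, subd a W (fun _ => r) = 0) :
    ∃ b1 b2 : Z2 → ℝ,
      (Function.support b1).Finite ∧ (Function.support b2).Finite ∧
      ∀ c : Z2 → ℝ, Bdd c →
        subd a W c = fun β => subd b1 W (nabla1 c) β + subd b2 W (nabla2 c) β := by
  rcases hW with rfl | rfl
  · apply main_aux W0 ?_ ?_ ?_ ?_ ?_ a ha h0
    · intro x y h
      have h0' := congrFun h 0
      have h1' := congrFun h 1
      simp [Matrix.mulVec, dotProduct, Fin.sum_univ_two, W0] at h0' h1'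
      funext j; fin_cases j <;> simp <;> omega
    · intro μ
      funext i
      fin_cases i <;>
        simp [Matrix.mulVec, dotProduct, Fin.sum_univ_two, W0] <;> ring
    · simp [Matrix.mulVec, dotProduct, Fin.sum_univ_two, W0]
    · simp [Matrix.mulVec, dotProduct, Fin.sum_univ_two, W0]
    · simp [Matrix.mulVec, dotProduct, Fin.sum_univ_two, W0]
  · apply main_aux W1 ?_ ?_ ?_ ?_ ?_ a ha h0
    · intro x y h
      have h0' := congrFun h 0
      have h1' := congrFun h 1
      simp [Matrix.mulVec, dotProduct, Fin.sum_univ_two, W1] at h0' h1'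
      funext j; fin_cases j <;> simp <;> omega
    · intro μ
      funext i
      fin_cases i <;>
        simp [Matrix.mulVec, dotProduct, Fin.sum_univ_two, W1] <;> ring
    · simp [Matrix.mulVec, dotProduct, Fin.sum_univ_two, W1]
    · simp [Matrix.mulVec, dotProduct, Fin.sum_univ_two, W1]
    · simp [Matrix.mulVec, dotProduct, Fin.sum_univ_two, W1]
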